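/- Let Y be a real random variable with CDF F, and let U ∼ Uniform[0,1] be independent of Y. Define V = F(Y^−) + U · ( F(Y) − F(Y^−) ), where F(y^−) denotes the left limit of F at y. Then V is uniformly distributed on [0,1]. -/

import Mathlib

open MeasureTheory ProbabilityTheory Real

noncomputable section

/-- CDF of a measure on `ℝ`. -/
def mcdf (μ : Measure ℝ) (x : ℝ) : ℝ := (μ (Set.Iic x)).toReal

/-- Left limit of the CDF of a measure on `ℝ` (i.e. `F(x⁻) = P(Y < x)`). -/
def mcdfLeft (μ : Measure ℝ) (x : ℝ) : ℝ := (μ (Set.Iio x)).toReal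

open Set Filter
open scoped ENNReal

namespace DTaux

variable (ν : Measure ℝ) [IsProbabilityMeasure ν]

lemma ofReal_mcdf (x : ℝ) : ENNReal.ofReal (mcdf ν x) = ν (Set.Iic x) :=
  ENNReal.ofReal_toReal (measure_ne_top ν _)

lemma ofReal_mcdfLeft (x : ℝ) : ENNReal.ofReal (mcdfLeft ν x) = ν (Set.Iio x) :=
  ENNReal.ofReal_toReal (measure_ne_top ν _)

lemma mcdf_eq_cdf (x : ℝ) : mcdf ν x = cdf ν x := (cdf_eq_real ν x).symm

lemma mcdf_nonneg (x : ℝ) : 0 ≤ mcdf ν x := ENNReal.toReal_nonneg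
lemma mcdfLeft_nonneg (x : ℝ) : 0 ≤ mcdfLeft ν x := ENNReal.toReal_nonneg

lemma mcdf_le_one (x : ℝ) : mcdf ν x ≤ 1 := by
  rw [mcdf_eq_cdf]; exact cdf_le_one ν x

lemma mcdf_mono : Monotone (mcdf ν) := fun a b h =>
  ENNReal.toReal_mono (measure_ne_top ν _) (measure_mono (Set.Iic_subset_Iic.2 h))

lemma mcdfLeft_mono : Monotone (mcdfLeft ν) := fun _ _ h =>
  ENNReal.toReal_mono (measure_ne_top ν _) (measure_mono (Set.Iio_subset_Iio h))

lemma mcdfLeft_le_mcdf (x : ℝ) : mcdfLeft ν x ≤ mcdf ν x :=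
  ENNReal.toReal_mono (measure_ne_top ν _) (measure_mono Set.Iio_subset_Iic_self)

end DTaux

namespace DTaux

variable {ν : Measure ℝ} [IsProbabilityMeasure ν]

lemma measurable_g :
    Measurable (fun p : ℝ × ℝ => mcdfLeft ν p.1 + p.2 * (mcdf ν p.1 - mcdfLeft ν p.1)) := by
  have h1 : Measurable (mcdf ν) := (mcdf_mono ν).measurable
  have h2 : Measurable (mcdfLeft ν) := (mcdfLeft_mono ν).measurable
  exact (h2.comp measurable_fst).add
    (measurable_snd.mul ((h1.comp measurable_fst).sub (h2.comp measurable_fst)))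

lemma volume_Icc01 : (volume (Set.Icc (0:ℝ) 1)) = 1 := by
  rw [Real.volume_Icc]; norm_num

instance : IsProbabilityMeasure (volume.restrict (Set.Icc (0:ℝ) 1)) := by
  constructor
  rw [Measure.restrict_apply_univ, volume_Icc01]

/-- the section set at height `u` -/
lemma Iio_eq_iUnion (a : ℝ) : Set.Iio a = ⋃ n : ℕ, Set.Iic (a - ((n:ℝ)+1)⁻¹) := by
  ext x
  simp only [Set.mem_Iio, Set.mem_iUnion, Set.mem_Iic]
  constructor
  · intro hx
    obtain ⟨n, hn⟩ := exists_nat_one_div_lt (sub_pos.2 hx)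
    exact ⟨n, by rw [one_div] at hn; linarith⟩
  · rintro ⟨n, hn⟩
    have : (0:ℝ) < ((n:ℝ)+1)⁻¹ := by positivity
    linarith

lemma Iic_eq_iInter (a : ℝ) : Set.Iic a = ⋂ n : ℕ, Set.Iic (a + ((n:ℝ)+1)⁻¹) := by
  ext x
  simp only [Set.mem_Iic, Set.mem_iInter]
  constructor
  · intro hx n
    have : (0:ℝ) < ((n:ℝ)+1)⁻¹ := by positivity
    linarith
  · intro h
    refine le_of_forall_pos_le_add fun ε hε => ?_
    obtain ⟨n, hn⟩ := exists_nat_one_div_lt hε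
    rw [one_div] at hn
    exact (h n).trans (by linarith)

end DTaux

section Key
open DTaux

lemma DTaux.key (ν : Measure ℝ) [IsProbabilityMeasure ν] :
    (ν.prod (volume.restrict (Set.Icc (0:ℝ) 1))).map
      (fun p : ℝ × ℝ => mcdfLeft ν p.1 + p.2 * (mcdf ν p.1 - mcdfLeft ν p.1)) =
    volume.restrict (Set.Icc (0:ℝ) 1) := by
  refine Measure.ext_of_Iic _ _ (fun t => ?_)
  rw [Measure.map_apply measurable_g measurableSet_Iic,
    Measure.prod_apply_symm (measurable_g measurableSet_Iic),
    Measure.restrict_apply measurableSet_Iic]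
  have hsec : ∀ u : ℝ, ((fun y => (y, u)) ⁻¹'
      ((fun p : ℝ × ℝ => mcdfLeft ν p.1 + p.2 * (mcdf ν p.1 - mcdfLeft ν p.1)) ⁻¹' Set.Iic t))
      = {y | mcdfLeft ν y + u * (mcdf ν y - mcdfLeft ν y) ≤ t} := fun u => rfl
  simp only [hsec]
  rcases lt_or_ge t 0 with ht | ht
  · -- t < 0 : everything is 0
    have h1 : Set.Iic t ∩ Set.Icc (0:ℝ) 1 = ∅ := by
      ext x; simp only [Set.mem_inter_iff, Set.mem_Iic, Set.mem_Icc, Set.mem_empty_iff_false,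
        iff_false, not_and]
      intro hxt hx0; linarith
    rw [h1, measure_empty]
    rw [setLIntegral_congr_fun measurableSet_Icc (fun u hu => ?_), lintegral_zero]
    have : {y | mcdfLeft ν y + u * (mcdf ν y - mcdfLeft ν y) ≤ t} = ∅ := by
      ext y; simp only [Set.mem_setOf_eq, Set.mem_empty_iff_false, iff_false, not_le]
      have h2 := mcdfLeft_nonneg ν y
      have h3 := sub_nonneg.2 (mcdfLeft_le_mcdf ν y)
      nlinarith [hu.1, mul_nonneg hu.1 h3]
    rw [this, measure_empty]
  rcases lt_or_ge t 1 with ht1 | ht1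
  · -- 0 ≤ t < 1 : the main case
    have hRHS : Set.Iic t ∩ Set.Icc (0:ℝ) 1 = Set.Icc 0 t := by
      ext x; simp only [Set.mem_inter_iff, Set.mem_Iic, Set.mem_Icc]
      constructor
      · rintro ⟨h1, h2, h3⟩; exact ⟨h2, h1⟩
      · rintro ⟨h1, h2⟩; exact ⟨h2, h1, h2.trans ht1.le⟩
    rw [hRHS, Real.volume_Icc, sub_zero]
    rw [setLIntegral_congr (Ioc_ae_eq_Icc (a := (0:ℝ)) (b := (1:ℝ))).symm]
    by_cases hex : ∃ y, mcdf ν y ≤ t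
    · obtain ⟨y0, hy0⟩ := hex
      set S : Set ℝ := {y | t < mcdf ν y} with hS
      have hSne : S.Nonempty := by
        have h := (tendsto_cdf_atTop ν).eventually_const_lt ht1
        obtain ⟨y, hy⟩ := h.exists
        exact ⟨y, by rwa [hS, Set.mem_setOf_eq, mcdf_eq_cdf]⟩
      have hSbdd : BddBelow S := by
        refine ⟨y0, fun y hy => ?_⟩
        by_contra hc
        push_neg at hc
        exact absurd ((mcdf_mono ν hc.le).trans hy0) (not_le.2 hy)
      set q := sInf S with hqdef
      -- left value at q is ≤ t
      have hq1 : mcdfLeft ν q ≤ t := by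
        have hle : ν (Set.Iio q) ≤ ENNReal.ofReal t := by
          rw [Iio_eq_iUnion q]
          have hmono : Monotone (fun n : ℕ => Set.Iic (q - ((n:ℝ)+1)⁻¹)) := by
            intro n m hnm
            refine Set.Iic_subset_Iic.2 (sub_le_sub_left ?_ q)
            have : ((n:ℝ)+1) ≤ ((m:ℝ)+1) := by exact_mod_cast by omega
            exact inv_anti₀ (by positivity) this
          rw [hmono.measure_iUnion]
          refine iSup_le fun n => ?_
          have hnot : q - ((n:ℝ)+1)⁻¹ ∉ S := by
            intro hmem
            have := csInf_le hSbdd hmem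
            have hpos : (0:ℝ) < ((n:ℝ)+1)⁻¹ := by positivity
            linarith
          have hFt : mcdf ν (q - ((n:ℝ)+1)⁻¹) ≤ t := not_lt.1 hnot
          rw [← ofReal_mcdf]
          exact ENNReal.ofReal_le_ofReal hFt
        have := ENNReal.toReal_mono ENNReal.ofReal_ne_top hle
        rwa [ENNReal.toReal_ofReal ht] at this
      -- value at q is ≥ t
      have hq2 : t ≤ mcdf ν q := by
        have hle : ENNReal.ofReal t ≤ ν (Set.Iic q) := by
          rw [Iic_eq_iInter q]
          have hanti : Antitone (fun n : ℕ => Set.Iic (q + ((n:ℝ)+1)⁻¹)) := by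
            intro n m hnm
            refine Set.Iic_subset_Iic.2 (add_le_add_right ?_ q)
            have : ((n:ℝ)+1) ≤ ((m:ℝ)+1) := by exact_mod_cast by omega
            exact inv_anti₀ (by positivity) this
          rw [hanti.measure_iInter (fun n => measurableSet_Iic.nullMeasurableSet)
            ⟨0, measure_ne_top ν _⟩]
          refine le_iInf fun n => ?_
          have hpos : (0:ℝ) < ((n:ℝ)+1)⁻¹ := by positivity
          obtain ⟨s, hsS, hs⟩ := (csInf_lt_iff hSbdd hSne).1
            (show sInf S < q + ((n:ℝ)+1)⁻¹ by rw [← hqdef]; linarith)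
          calc ENNReal.ofReal t ≤ ENNReal.ofReal (mcdf ν s) :=
                ENNReal.ofReal_le_ofReal (le_of_lt hsS)
            _ = ν (Set.Iic s) := ofReal_mcdf ν s
            _ ≤ ν (Set.Iic (q + ((n:ℝ)+1)⁻¹)) := measure_mono (Set.Iic_subset_Iic.2 hs.le)
        have := ENNReal.toReal_mono (measure_ne_top ν _) hle
        rwa [ENNReal.toReal_ofReal ht] at this
      -- the section sets
      have hset : ∀ u ∈ Set.Ioc (0:ℝ) 1,
          {y | mcdfLeft ν y + u * (mcdf ν y - mcdfLeft ν y) ≤ t} =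
          if mcdfLeft ν q + u * (mcdf ν q - mcdfLeft ν q) ≤ t then Set.Iic q else Set.Iio q := by
        intro u hu
        have hlow : ∀ y < q, mcdfLeft ν y + u * (mcdf ν y - mcdfLeft ν y) ≤ t := by
          intro y hy
          have hnot : y ∉ S := fun hmem => absurd (csInf_le hSbdd hmem) (not_le.2 hy)
          have hFy : mcdf ν y ≤ t := not_lt.1 hnot
          have hΔ : 0 ≤ mcdf ν y - mcdfLeft ν y := sub_nonneg.2 (mcdfLeft_le_mcdf ν y)
          nlinarith [hu.2, mul_le_of_le_one_left hΔ hu.2]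
        have hhigh : ∀ y, q < y → ¬ (mcdfLeft ν y + u * (mcdf ν y - mcdfLeft ν y) ≤ t) := by
          intro y hy
          obtain ⟨s, hsS, hs⟩ := (csInf_lt_iff hSbdd hSne).1 hy
          have h1 : mcdf ν s ≤ mcdfLeft ν y :=
            ENNReal.toReal_mono (measure_ne_top ν _)
              (measure_mono (fun x hx => lt_of_le_of_lt hx hs))
          have hΔ : 0 ≤ mcdf ν y - mcdfLeft ν y := sub_nonneg.2 (mcdfLeft_le_mcdf ν y)
          have := hsS
          simp only [hS, Set.mem_setOf_eq] at this
          nlinarith [mul_nonneg hu.1.le hΔ]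
        by_cases hc : mcdfLeft ν q + u * (mcdf ν q - mcdfLeft ν q) ≤ t
        · rw [if_pos hc]
          ext y
          simp only [Set.mem_setOf_eq, Set.mem_Iic]
          constructor
          · intro hval
            by_contra hgt
            exact hhigh y (not_le.1 hgt) hval
          · intro hval
            rcases lt_or_eq_of_le hval with h | h
            · exact hlow y h
            · rw [h]; exact hc
        · rw [if_neg hc]
          ext y
          simp only [Set.mem_setOf_eq, Set.mem_Iio]
          constructor
          · intro hval
            rcases lt_trichotomy y q with h | h | h
            · exact h
            · exact absurd (h ▸ hval) hc
            · exact absurd hval (hhigh y h)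
          · exact hlow y
      -- now compute the integral
      rcases eq_or_lt_of_le (sub_nonneg.2 (mcdfLeft_le_mcdf ν q)) with hD | hD
      · -- no atom at q
        have hFq : mcdf ν q = t := by linarith
        have hval : ∀ u ∈ Set.Ioc (0:ℝ) 1,
            ν {y | mcdfLeft ν y + u * (mcdf ν y - mcdfLeft ν y) ≤ t} = ENNReal.ofReal t := by
          intro u hu
          have hcond : mcdfLeft ν q + u * (mcdf ν q - mcdfLeft ν q) ≤ t := by
            rw [← hD, mul_zero, add_zero]; exact hq1
          rw [hset u hu, if_pos hcond, ← ofReal_mcdf, hFq]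
        rw [setLIntegral_congr_fun measurableSet_Ioc hval, setLIntegral_const,
          Real.volume_Ioc]
        norm_num
      · -- atom at q
        set c := (t - mcdfLeft ν q) / (mcdf ν q - mcdfLeft ν q) with hcdef
        have hc0 : 0 ≤ c := div_nonneg (by linarith) hD.le
        have hc1 : c ≤ 1 := (div_le_one hD).2 (by linarith)
        have hsingleton : ν (Set.Iio q) + ν {q} = ν (Set.Iic q) := by
          have hdisj : Disjoint (Set.Iio q) {q} := Set.disjoint_singleton_right.2 (by simp)
          have := measure_union (μ := ν) hdisj (measurableSet_singleton q)
          rw [Set.Iio_union_right] at this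
          exact this.symm
        have hatom : ν {q} = ENNReal.ofReal (mcdf ν q - mcdfLeft ν q) := by
          have h1 : ENNReal.ofReal (mcdfLeft ν q) + ν {q}
              = ENNReal.ofReal (mcdfLeft ν q) + ENNReal.ofReal (mcdf ν q - mcdfLeft ν q) := by
            rw [← ENNReal.ofReal_add (mcdfLeft_nonneg ν q) (by linarith), add_sub_cancel,
              ofReal_mcdfLeft, ofReal_mcdf, hsingleton]
          exact (ENNReal.add_right_inj ENNReal.ofReal_ne_top).1 h1
        have hval : ∀ u ∈ Set.Ioc (0:ℝ) 1,
            ν {y | mcdfLeft ν y + u * (mcdf ν y - mcdfLeft ν y) ≤ t} =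
            ν (Set.Iio q) + (Set.Iic c).indicator (fun _ => ν {q}) u := by
          intro u hu
          rw [hset u hu]
          by_cases hcu : u ≤ c
          · have hcond : mcdfLeft ν q + u * (mcdf ν q - mcdfLeft ν q) ≤ t := by
              have := (le_div_iff₀ hD).1 (hcdef ▸ hcu)
              linarith
            rw [if_pos hcond, Set.indicator_of_mem (Set.mem_Iic.2 hcu), hsingleton]
          · have hcond : ¬ (mcdfLeft ν q + u * (mcdf ν q - mcdfLeft ν q) ≤ t) := by
              intro hh
              exact hcu ((le_div_iff₀ hD).2 (by linarith))
            rw [if_neg hcond, Set.indicator_of_notMem (fun h => hcu (Set.mem_Iic.1 h)),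
              add_zero]
        have hIoc : Set.Iic c ∩ Set.Ioc (0:ℝ) 1 = Set.Ioc 0 c := by
          ext x
          simp only [Set.mem_inter_iff, Set.mem_Iic, Set.mem_Ioc]
          constructor
          · rintro ⟨h1, h2, h3⟩; exact ⟨h2, h1⟩
          · rintro ⟨h1, h2⟩; exact ⟨h2, h1, h2.trans hc1⟩
        rw [setLIntegral_congr_fun measurableSet_Ioc hval,
          lintegral_add_right _ (measurable_const.indicator measurableSet_Iic),
          setLIntegral_const, lintegral_indicator measurableSet_Iic, setLIntegral_const,
          Measure.restrict_apply measurableSet_Iic, hIoc, Real.volume_Ioc, Real.volume_Ioc,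
          hatom, ← ofReal_mcdfLeft]
        rw [show (1:ℝ) - 0 = 1 by norm_num, ENNReal.ofReal_one, mul_one, sub_zero,
          ← ENNReal.ofReal_mul (by linarith), mul_comm (mcdf ν q - mcdfLeft ν q),
          div_mul_cancel₀ _ (by linarith : mcdf ν q - mcdfLeft ν q ≠ 0),
          ← ENNReal.ofReal_add (mcdfLeft_nonneg ν q) (by linarith), add_sub_cancel]
    · -- no y with F y ≤ t : forces t = 0 and empty sections
      push_neg at hex
      have ht0 : t ≤ 0 := by
        refine ge_of_tendsto (tendsto_cdf_atBot ν) ?_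
        exact Filter.Eventually.of_forall fun y => by
          rw [← mcdf_eq_cdf]; exact (hex y).le
      have ht00 : t = 0 := le_antisymm ht0 ht
      subst ht00
      rw [setLIntegral_congr_fun measurableSet_Ioc (fun u hu => ?_), lintegral_zero]
      · simp
      have : {y | mcdfLeft ν y + u * (mcdf ν y - mcdfLeft ν y) ≤ 0} = ∅ := by
        ext y
        simp only [Set.mem_setOf_eq, Set.mem_empty_iff_false, iff_false, not_le]
        have h2 := mcdfLeft_nonneg ν y
        have h3 := sub_nonneg.2 (mcdfLeft_le_mcdf ν y)
        have h4 := hex y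
        rcases eq_or_lt_of_le h3 with hΔ | hΔ
        · have : mcdf ν y = mcdfLeft ν y := by linarith
          linarith [mul_nonneg hu.1.le h3]
        · nlinarith [mul_pos hu.1 hΔ]
      rw [this, measure_empty]
  · -- t ≥ 1 : everything is full
    have h1 : Set.Iic t ∩ Set.Icc (0:ℝ) 1 = Set.Icc 0 1 := by
      refine Set.inter_eq_self_of_subset_right fun x hx => ?_
      exact le_trans hx.2 ht1
    rw [h1, volume_Icc01]
    have h2 : ∀ u ∈ Set.Icc (0:ℝ) 1,
        ν {y | mcdfLeft ν y + u * (mcdf ν y - mcdfLeft ν y) ≤ t} = (1:ℝ≥0∞) := by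
      intro u hu
      have : {y | mcdfLeft ν y + u * (mcdf ν y - mcdfLeft ν y) ≤ t} = Set.univ := by
        ext y
        simp only [Set.mem_setOf_eq, Set.mem_univ, iff_true]
        have h2 := mcdfLeft_le_mcdf ν y
        have h3 := mcdf_le_one ν y
        have h4 : u * (mcdf ν y - mcdfLeft ν y) ≤ mcdf ν y - mcdfLeft ν y :=
          mul_le_of_le_one_left (by linarith) hu.2
        linarith
      rw [this, measure_univ]
    rw [setLIntegral_congr_fun measurableSet_Icc h2, setLIntegral_const,
      volume_Icc01, one_mul]

end Key

/-- **The distributional transform is uniform.**  If `Y` has CDF `F` and `U ∼ Uniform[0,1]`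
is independent of `Y`, then `V = F(Y⁻) + U·(F(Y) − F(Y⁻))` is uniformly distributed on
`[0,1]`. -/
theorem distributional_transform_uniform
    {Ω : Type*} [MeasurableSpace Ω] (μ : Measure Ω) [IsProbabilityMeasure μ]
    (Y U : Ω → ℝ) (hY : Measurable Y) (hU : Measurable U)
    (hUlaw : μ.map U = volume.restrict (Set.Icc (0 : ℝ) 1))
    (hindep : IndepFun Y U μ) :
    μ.map (fun ω =>
        mcdfLeft (μ.map Y) (Y ω) +
          U ω * (mcdf (μ.map Y) (Y ω) - mcdfLeft (μ.map Y) (Y ω))) =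
      volume.restrict (Set.Icc (0 : ℝ) 1) := by
  have hprob : IsProbabilityMeasure (μ.map Y) := Measure.isProbabilityMeasure_map hY.aemeasurable
  have hpair : μ.map (fun ω => (Y ω, U ω)) = (μ.map Y).prod (μ.map U) :=
    (indepFun_iff_map_prod_eq_prod_map_map hY.aemeasurable hU.aemeasurable).1 hindep
  have hmap : μ.map (fun ω =>
        mcdfLeft (μ.map Y) (Y ω) +
          U ω * (mcdf (μ.map Y) (Y ω) - mcdfLeft (μ.map Y) (Y ω))) =
      (μ.map (fun ω => (Y ω, U ω))).map
        (fun p : ℝ × ℝ => mcdfLeft (μ.map Y) p.1 + p.2 * (mcdf (μ.map Y) p.1 - mcdfLeft (μ.map Y) p.1)) := by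
    rw [Measure.map_map DTaux.measurable_g (hY.prodMk hU)]
    rfl
  rw [hmap, hpair, hUlaw, DTaux.key]
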